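/- For every positive integer n, the coefficient of q^n in the formal power series Σ_{k=1}^∞ q^k/(1+(-q)^k)^2 equals Σ_{r | n} (-1)^{(r+1)(n/r+1)} · r. -/

import Mathlib

set_option maxRecDepth 8000

open Finset PowerSeries

/-- The formal variable as a power series over ℚ. -/
noncomputable def Q : PowerSeries ℚ := PowerSeries.X

/-- psSum f is the formal power series sum_{k=1}^∞ f k; since in all uses below the
k-th term has order at least k, the coefficient of q^n is sum_{k=1}^n coeff n (f k). -/
noncomputable def psSum (f : ℕ → PowerSeries ℚ) : PowerSeries ℚ :=
  PowerSeries.mk fun n => ∑ k ∈ Finset.Icc 1 n, PowerSeries.coeff n (f k)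

/-- psProd f is the formal power series prod_{j=1}^∞ f j; since in all uses below
f j = 1 + O(q^j), the coefficient of q^n is that of prod_{j=1}^n f j. -/
noncomputable def psProd (f : ℕ → PowerSeries ℚ) : PowerSeries ℚ :=
  PowerSeries.mk fun n => PowerSeries.coeff n (∏ j ∈ Finset.Icc 1 n, f j)

/-- Coefficient function of the expansion of `(1+(-q)^k)^{-2}`. -/
noncomputable def bco (k j : ℕ) : ℚ :=
  if k ∣ j then (-1 : ℚ) ^ ((j / k) * (k + 1)) * (((j / k : ℕ) : ℚ) + 1) else 0

/-- The power series `(1+(-q)^k)^{-2}` explicitly. -/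
noncomputable def B (k : ℕ) : PowerSeries ℚ := PowerSeries.mk (bco k)

lemma B_mul (k : ℕ) (hk : 0 < k) : B k * (1 + (-Q) ^ k) ^ 2 = 1 := by
  have hc : ((-1 : ℚ⟦X⟧) ^ k) * ((-1 : ℚ⟦X⟧) ^ k) = 1 := by
    rw [← pow_add]
    exact Even.neg_one_pow ⟨k, rfl⟩
  have key : B k * (1 + (-Q) ^ k) ^ 2
      = B k + ((-1 : ℚ⟦X⟧) ^ k * 2) * (B k * X ^ k) + B k * (X ^ k * X ^ k) := by
    have hz : ((-Q) : ℚ⟦X⟧) ^ k = (-1) ^ k * X ^ k := by rw [Q, neg_pow]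
    rw [hz]
    linear_combination (B k * (X : ℚ⟦X⟧) ^ k * X ^ k) * hc
  rw [key]
  ext n
  rw [map_add, map_add]
  have hC : ((-1 : ℚ⟦X⟧) ^ k * 2) = PowerSeries.C ((-1 : ℚ) ^ k * 2) := by
    rw [map_mul, map_pow, map_neg, map_one, map_ofNat]
  rw [hC, PowerSeries.coeff_C_mul, ← pow_add, PowerSeries.coeff_mul_X_pow',
    PowerSeries.coeff_mul_X_pow']
  simp only [B, PowerSeries.coeff_mk, PowerSeries.coeff_one]
  have hkk : k + k = 2 * k := by ring
  rw [hkk]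
  by_cases hdvd : k ∣ n
  · obtain ⟨m, rfl⟩ := hdvd
    match m with
    | 0 =>
      simp only [Nat.mul_zero]
      have h1 : ¬ k ≤ 0 := by omega
      have h2 : ¬ 2 * k ≤ 0 := by omega
      simp [bco, h1, h2, hk.ne']
    | 1 =>
      have h1 : k ≤ k * 1 := by omega
      have h2 : ¬ 2 * k ≤ k * 1 := by omega
      have hne : k * 1 ≠ 0 := by omega
      simp only [h1, h2, if_true, if_false, hne]
      have e1 : bco k (k * 1) = (-1 : ℚ) ^ (k + 1) * 2 := by
        rw [mul_one]
        simp only [bco, dvd_refl, if_true, Nat.div_self hk, one_mul]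
        norm_num
      have e2 : bco k (k * 1 - k) = 1 := by
        have : k * 1 - k = 0 := by omega
        simp [bco, this]
      rw [e1, e2, add_zero]
      rw [pow_succ]
      ring
    | (m + 2) =>
      have h1 : k ≤ k * (m + 2) := by nlinarith
      have h2 : 2 * k ≤ k * (m + 2) := by nlinarith
      have hne : k * (m + 2) ≠ 0 := by positivity
      simp only [h1, h2, if_true, hne, if_false]
      have d1 : k * (m + 2) - k = k * (m + 1) := by ring_nf; omega
      have d2 : k * (m + 2) - 2 * k = k * m := by ring_nf; omega
      rw [d1, d2]
      have e0 : bco k (k * (m + 2)) = (-1 : ℚ) ^ ((m + 2) * (k + 1)) * (m + 3) := by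
        have h : (k * (m + 2)) / k = m + 2 := Nat.mul_div_cancel_left _ hk
        simp only [bco, h, Dvd.intro _ rfl, if_true]
        push_cast; ring
      have e1 : bco k (k * (m + 1)) = (-1 : ℚ) ^ ((m + 1) * (k + 1)) * (m + 2) := by
        have h : (k * (m + 1)) / k = m + 1 := Nat.mul_div_cancel_left _ hk
        simp only [bco, h, Dvd.intro _ rfl, if_true]
        push_cast; ring
      have e2 : bco k (k * m) = (-1 : ℚ) ^ (m * (k + 1)) * (m + 1) := by
        have h : (k * m) / k = m := Nat.mul_div_cancel_left _ hk
        simp only [bco, h, Dvd.intro _ rfl, if_true]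
      rw [e0, e1, e2]
      have x0 : (m + 2) * (k + 1) = m * (k + 1) + ((k + 1) + (k + 1)) := by ring
      have x1 : (m + 1) * (k + 1) = m * (k + 1) + (k + 1) := by ring
      rw [x0, x1, pow_add, pow_add]
      have hff : (-1 : ℚ) ^ (k + 1) * (-1 : ℚ) ^ (k + 1) = 1 := by
        rw [← pow_add]; exact Even.neg_one_pow ⟨k + 1, rfl⟩
      have hpf : (-1 : ℚ) ^ k * (-1 : ℚ) ^ (k + 1) = -1 := by
        rw [← pow_add]
        exact Odd.neg_one_pow ⟨k, by ring⟩
      set a := (-1 : ℚ) ^ (m * (k + 1))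
      set f := (-1 : ℚ) ^ (k + 1)
      set p := (-1 : ℚ) ^ k
      linear_combination a * ((m : ℚ) + 3) * hff + 2 * a * ((m : ℚ) + 2) * hpf
  · have hne : n ≠ 0 := by rintro rfl; exact hdvd (dvd_zero k)
    have hb0 : bco k n = 0 := by simp [bco, hdvd]
    have hb1 : k ≤ n → bco k (n - k) = 0 := by
      intro hle
      have h : ¬ k ∣ n - k := by
        intro h
        apply hdvd
        have := Nat.dvd_add h (dvd_refl k)
        rwa [Nat.sub_add_cancel hle] at this
      simp [bco, h]
    have hb2 : 2 * k ≤ n → bco k (n - 2 * k) = 0 := by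
      intro hle
      have h : ¬ k ∣ n - 2 * k := by
        intro h
        apply hdvd
        have := Nat.dvd_add h (dvd_mul_left k 2)
        rwa [Nat.sub_add_cancel hle] at this
      simp [bco, h]
    rcases le_or_gt k n with h1 | h1 <;> rcases le_or_gt (2 * k) n with h2 | h2
    · rw [if_pos h1, if_pos h2, hb0, hb1 h1, hb2 h2, if_neg hne]; ring
    · rw [if_pos h1, if_neg (by omega), hb0, hb1 h1, if_neg hne]; ring
    · omega
    · rw [if_neg (by omega), if_neg (by omega), hb0, if_neg hne]; ring

lemma B_eq (k : ℕ) (hk : 0 < k) : ((1 + (-Q) ^ k) ^ 2)⁻¹ = B k := by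
  rw [PowerSeries.inv_eq_iff_mul_eq_one]
  · exact B_mul k hk
  · simp [Q, map_pow, map_add, map_neg, zero_pow hk.ne']

theorem coeff_lambert_sum (n : ℕ) (hn : 0 < n) :
    PowerSeries.coeff n (psSum (fun k => Q ^ k * ((1 + (-Q) ^ k) ^ 2)⁻¹))
      = ∑ r ∈ n.divisors, (-1 : ℚ) ^ ((r + 1) * (n / r + 1)) * r := by
  rw [psSum, PowerSeries.coeff_mk]
  have step1 : ∀ k ∈ Finset.Icc 1 n,
      PowerSeries.coeff n (Q ^ k * ((1 + (-Q) ^ k) ^ 2)⁻¹) = bco k (n - k) := by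
    intro k hk
    rw [Finset.mem_Icc] at hk
    rw [B_eq k (by omega), mul_comm, Q, PowerSeries.coeff_mul_X_pow' _ k n,
      if_pos hk.2, B, PowerSeries.coeff_mk]
  rw [Finset.sum_congr rfl step1]
  have hsub : n.divisors ⊆ Finset.Icc 1 n := by
    intro d hd
    rw [Nat.mem_divisors] at hd
    rw [Finset.mem_Icc]
    exact ⟨Nat.one_le_iff_ne_zero.mpr (fun h => by subst h; exact hd.2 (zero_dvd_iff.mp hd.1)),
      Nat.le_of_dvd hn hd.1⟩
  rw [← Finset.sum_subset hsub]
  · -- now sum over divisors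
    have step2 : ∀ k ∈ n.divisors, bco k (n - k)
        = (fun d => (-1 : ℚ) ^ ((d - 1) * (n / d + 1)) * d) (n / k) := by
      intro k hk
      rw [Nat.mem_divisors] at hk
      obtain ⟨⟨m, rfl⟩, hne⟩ := hk
      have hk0 : 0 < k := Nat.pos_of_ne_zero (by rintro rfl; simp at hne)
      have hm0 : 0 < m := Nat.pos_of_ne_zero (by rintro rfl; simp at hne)
      have hdivk : k * m / k = m := Nat.mul_div_cancel_left _ hk0
      have hdivm : k * m / m = k := by rw [mul_comm]; exact Nat.mul_div_cancel_left _ hm0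
      have hsub' : k * m - k = k * (m - 1) := by
        rw [Nat.mul_sub, mul_one]
      have hdvd : k ∣ k * m - k := by rw [hsub']; exact Dvd.intro _ rfl
      have hdiv2 : (k * m - k) / k = m - 1 := by
        rw [hsub', Nat.mul_div_cancel_left _ hk0]
      simp only [bco, hdvd, if_true, hdiv2, hdivk, hdivm]
      have : ((m - 1 : ℕ) : ℚ) + 1 = m := by
        rw [Nat.cast_sub hm0]; ring
      rw [this]
    rw [Finset.sum_congr rfl step2, Nat.sum_div_divisors n
      (fun d => (-1 : ℚ) ^ ((d - 1) * (n / d + 1)) * d)]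
    refine Finset.sum_congr rfl fun r hr => ?_
    rw [Nat.mem_divisors] at hr
    have hr0 : 0 < r := Nat.pos_of_dvd_of_pos hr.1 hn
    congr 1
    obtain ⟨r', rfl⟩ : ∃ r', r = r' + 1 := ⟨r - 1, by omega⟩
    have : (r' + 1 + 1) * (n / (r' + 1) + 1)
        = (r' + 1 - 1) * (n / (r' + 1) + 1) + 2 * (n / (r' + 1) + 1) := by
      simp; ring
    rw [this, pow_add, pow_mul, pow_mul, neg_one_sq, one_pow, mul_one]
  · intro k hk hknd
    rw [Finset.mem_Icc] at hk
    rw [Nat.mem_divisors] at hknd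
    have hkdvd : ¬ k ∣ n := fun h => hknd ⟨h, hn.ne'⟩
    have : ¬ k ∣ n - k := by
      intro h
      apply hkdvd
      have := Nat.dvd_add h (dvd_refl k)
      rwa [Nat.sub_add_cancel hk.2] at this
    simp [bco, this]
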